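/- Let N ≥ 1 and let (a_0,…,a_{k−1}) be a sequence of positive integers with a_0+⋯+a_{k−1} = N, with partial sums s_{−1} = 0 and s_i = a_0+⋯+a_i. Then the number of permutations σ of {0,…,N−1} with OCS(σ) = (a_0,…,a_{k−1}) equals N! / ∏_{i=0}^{k−1}(N − s_{i−1}). Equivalently, the ordered cycle structure of a uniformly random permutation of {0,…,N−1} has the same distribution as the output of the following process: set s_{−1} = 0, repeatedly choose s_i uniformly at random from {s_{i−1}+1,…,N} until s_i = N, and output the sequence of successive differences. -/

import Mathlib

/-- The set of minimal elements of the cycles of a permutation of `Fin N`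
(one per cycle, fixed points included). -/
noncomputable def cycleMins {N : ℕ} (σ : Equiv.Perm (Fin N)) : Finset (Fin N) :=
  @Finset.filter _ (fun x => ∀ m : ℕ, x ≤ (σ ^ m) x) (Classical.decPred _) Finset.univ

/-- The ordered cycle structure of a permutation of `Fin N`: the list of lengths of its
cycles (fixed points counting as cycles of length 1), listed in increasing order of the
minimal elements of the cycles. -/
noncomputable def OCS {N : ℕ} (σ : Equiv.Perm (Fin N)) : List ℕ :=
  ((cycleMins σ).sort (· ≤ ·)).map fun x => Function.minimalPeriod (⇑σ) x

set_option linter.unusedSectionVars false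
set_option maxHeartbeats 1000000
open Function Equiv

noncomputable def cmins {α : Type} [Fintype α] [LinearOrder α] (σ : Equiv.Perm α) : Finset α :=
  @Finset.filter _ (fun x => ∀ m : ℕ, x ≤ (σ ^ m) x) (Classical.decPred _) Finset.univ

noncomputable def ocs {α : Type} [Fintype α] [LinearOrder α] (σ : Equiv.Perm α) : List ℕ :=
  ((cmins σ).sort (· ≤ ·)).map fun x => Function.minimalPeriod (⇑σ) x

lemma pow_mp {β : Type*} (σ : Equiv.Perm β) (x : β) :
    (σ ^ (Function.minimalPeriod (⇑σ) x)) x = x := by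
  have := Function.isPeriodicPt_minimalPeriod (⇑σ) x
  rwa [Function.IsPeriodicPt, Function.IsFixedPt, Equiv.Perm.iterate_eq_pow] at this

lemma pow_mod_mp {β : Type*} (σ : Equiv.Perm β) (x : β) (n : ℕ) :
    (σ ^ (n % Function.minimalPeriod (⇑σ) x)) x = (σ ^ n) x := by
  have := @Function.iterate_mod_minimalPeriod_eq _ (⇑σ) x n
  rwa [Equiv.Perm.iterate_eq_pow, Equiv.Perm.iterate_eq_pow] at this

lemma mp_pos {β : Type*} [Finite β] (σ : Equiv.Perm β) (x : β) :
    0 < Function.minimalPeriod (⇑σ) x := by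
  apply Function.IsPeriodicPt.minimalPeriod_pos (orderOf_pos σ)
  show (⇑σ)^[orderOf σ] x = x
  rw [Equiv.Perm.iterate_eq_pow, pow_orderOf_eq_one]
  rfl

lemma subtypePerm_pow_apply {β : Type*} (σ : Equiv.Perm β) {p : β → Prop}
    (h : ∀ x, p x ↔ p (σ x)) (n : ℕ) (y : {x // p x}) :
    ((((σ.subtypePerm (fun x => (h x).symm))) ^ n) y : β) = (σ ^ n) ↑y := by
  rw [Equiv.Perm.subtypePerm_pow]
  rfl

lemma mp_subtype {β : Type*} [Finite β] (σ : Equiv.Perm β) {p : β → Prop}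
    (h : ∀ x, p x ↔ p (σ x)) (y : {x // p x}) :
    Function.minimalPeriod (⇑(σ.subtypePerm (fun x => (h x).symm))) y = Function.minimalPeriod (⇑σ) ↑y := by
  haveI : Finite {x // p x} := Subtype.finite
  have key : ∀ n : ℕ, (((σ.subtypePerm (fun x => (h x).symm)) ^ n) y = y ↔ (σ ^ n) (↑y : β) = ↑y) := by
    intro n
    rw [Subtype.ext_iff, subtypePerm_pow_apply σ h]
  have h1 : Function.IsPeriodicPt (⇑σ) (Function.minimalPeriod (⇑(σ.subtypePerm (fun x => (h x).symm))) y) ↑y := by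
    show (⇑σ)^[_] (↑y : β) = ↑y
    rw [Equiv.Perm.iterate_eq_pow]
    exact (key _).mp (pow_mp _ y)
  have h2 : Function.IsPeriodicPt (⇑(σ.subtypePerm (fun x => (h x).symm))) (Function.minimalPeriod (⇑σ) ↑y) y := by
    show (⇑(σ.subtypePerm (fun x => (h x).symm)))^[_] y = y
    rw [Equiv.Perm.iterate_eq_pow]
    exact (key _).mpr (pow_mp σ (↑y : β))
  exact le_antisymm (h2.minimalPeriod_le (mp_pos σ ↑y)) (h1.minimalPeriod_le (mp_pos _ y))

lemma orbit_mem_iff {β : Type*} [Finite β] (σ : Equiv.Perm β) (b : β) (x : β) :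
    ((¬ ∃ n : ℕ, (σ ^ n) b = x) ↔ ¬ ∃ n : ℕ, (σ ^ n) b = σ x) := by
  apply not_congr
  constructor
  · rintro ⟨n, rfl⟩
    exact ⟨n + 1, by rw [pow_succ', Equiv.Perm.mul_apply]⟩
  · rintro ⟨n, hn⟩
    have hP : 0 < Function.minimalPeriod (⇑σ) b := mp_pos σ b
    refine ⟨n + Function.minimalPeriod (⇑σ) b - 1, σ.injective ?_⟩
    rw [← Equiv.Perm.mul_apply, ← pow_succ',
      show n + Function.minimalPeriod (⇑σ) b - 1 + 1 = n + Function.minimalPeriod (⇑σ) b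
        from by omega,
      pow_add, Equiv.Perm.mul_apply, pow_mp, hn]

section Gen
variable {α : Type} [Fintype α] [LinearOrder α]

lemma mem_cmins {σ : Equiv.Perm α} {x : α} : x ∈ cmins σ ↔ ∀ m : ℕ, x ≤ (σ ^ m) x := by
  classical
  unfold cmins
  rw [Finset.filter_congr_decidable, Finset.mem_filter]
  simp

lemma sort_map_val {p : α → Prop} [Fintype {x // p x}] (T : Finset {x // p x}) :
    (T.map (Function.Embedding.subtype p)).sort (· ≤ ·)
      = (T.sort (· ≤ ·)).map Subtype.val := by
  have hperm : ((T.map (Function.Embedding.subtype p)).sort (· ≤ ·)).Perm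
      ((T.sort (· ≤ ·)).map Subtype.val) := by
    rw [← Multiset.coe_eq_coe]
    show ((T.map (Function.Embedding.subtype p)).sort (· ≤ ·) : Multiset α)
        = ((T.sort (· ≤ ·) : List {x // p x}).map Subtype.val : List α)
    rw [Finset.sort_eq, Finset.map_val, ← Multiset.map_coe, Finset.sort_eq]
    rfl
  have hs2 : ((T.sort (· ≤ ·)).map Subtype.val).Pairwise (· ≤ ·) :=
    List.Pairwise.map _ (fun a b hab => hab) (Finset.pairwise_sort T (· ≤ ·))
  exact List.Perm.eq_of_pairwise' (Finset.pairwise_sort _ _) hs2 hperm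

lemma cmins_cons (σ : Equiv.Perm α) (b : α) (hb : ∀ x, b ≤ x) {p : α → Prop}
    [Fintype {x // p x}]
    (hp : ∀ x, p x ↔ ¬ ∃ n : ℕ, (σ ^ n) b = x) (h : ∀ x, p x ↔ p (σ x)) :
    cmins σ = insert b ((cmins (σ.subtypePerm (fun x => (h x).symm))).map (Function.Embedding.subtype p)) := by
  ext x
  rw [mem_cmins, Finset.mem_insert, Finset.mem_map]
  constructor
  · intro hx
    by_cases hxS : ∃ n : ℕ, (σ ^ n) b = x
    · left
      obtain ⟨n, rfl⟩ := hxS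
      have hP : 0 < Function.minimalPeriod (⇑σ) b := mp_pos σ b
      have h1 : (σ ^ (Function.minimalPeriod (⇑σ) b - n % Function.minimalPeriod (⇑σ) b))
          ((σ ^ n) b) = b := by
        rw [← pow_mod_mp σ b n, ← Equiv.Perm.mul_apply, ← pow_add,
          Nat.sub_add_cancel (Nat.mod_lt _ hP).le, pow_mp]
      have h2 := hx (Function.minimalPeriod (⇑σ) b - n % Function.minimalPeriod (⇑σ) b)
      rw [h1] at h2
      exact le_antisymm h2 (hb _)
    · right
      refine ⟨⟨x, (hp x).mpr hxS⟩, ?_, rfl⟩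
      rw [mem_cmins]
      intro m
      have hv := subtypePerm_pow_apply σ h m ⟨x, (hp x).mpr hxS⟩
      exact Subtype.coe_le_coe.mp (by rw [hv]; exact hx m)
  · rintro (rfl | ⟨y, hy, rfl⟩)
    · exact fun m => hb _
    · rw [mem_cmins] at hy
      intro m
      have hv := subtypePerm_pow_apply σ h m y
      show ((y : α)) ≤ _
      rw [show ((σ ^ m) (Function.Embedding.subtype p y) : α) = (((σ.subtypePerm (fun x => (h x).symm) ^ m) y : {x // p x}) : α) from hv.symm]
      exact Subtype.coe_le_coe.mpr (hy m)

lemma ocs_eq_cons (σ : Equiv.Perm α) (b : α) (hb : ∀ x, b ≤ x) {p : α → Prop}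
    [Fintype {x // p x}]
    (hp : ∀ x, p x ↔ ¬ ∃ n : ℕ, (σ ^ n) b = x) (h : ∀ x, p x ↔ p (σ x)) :
    ocs σ = Function.minimalPeriod (⇑σ) b :: ocs (σ.subtypePerm (fun x => (h x).symm)) := by
  have hcm := cmins_cons σ b hb hp h
  have hbnot : b ∉ (cmins (σ.subtypePerm (fun x => (h x).symm))).map (Function.Embedding.subtype p) := by
    rw [Finset.mem_map]
    rintro ⟨y, -, hy⟩
    have : p b := hy ▸ y.2
    exact (hp b).mp this ⟨0, rfl⟩
  have hsorted : (cmins σ).sort (· ≤ ·)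
      = b :: (((cmins (σ.subtypePerm (fun x => (h x).symm))).map (Function.Embedding.subtype p)).sort (· ≤ ·)) := by
    rw [hcm, Finset.sort_insert (· ≤ ·) (fun c _ => hb c) hbnot]
  rw [ocs, hsorted, List.map_cons, sort_map_val, List.map_map]
  congr 1
  apply List.map_congr_left
  intro y hy
  show Function.minimalPeriod (⇑σ) ↑y = _
  rw [← mp_subtype σ h y]

lemma ocs_head (σ : Equiv.Perm α) (b : α) (hb : ∀ x, b ≤ x) :
    ∃ t, ocs σ = Function.minimalPeriod (⇑σ) b :: t := by
  have hbm : b ∈ cmins σ := mem_cmins.mpr (fun m => hb _)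
  have hins : insert b ((cmins σ).erase b) = cmins σ := Finset.insert_erase hbm
  have hs : (cmins σ).sort (· ≤ ·) = b :: ((cmins σ).erase b).sort (· ≤ ·) := by
    conv_lhs => rw [← hins]
    rw [Finset.sort_insert (· ≤ ·) (fun c _ => hb c) (Finset.notMem_erase b _)]
  exact ⟨_, by rw [ocs, hs, List.map_cons]⟩

end Gen

lemma card_fib {α : Type} [Fintype α] [LinearOrder α] (b : α) (hb : ∀ x, b ≤ x)
    (a' : ℕ) (L' : List ℕ) (g : Fin (a' + 1) ↪ α) (hg : g 0 = b)
    [Fintype {x : α // x ∉ Set.range ⇑g}] :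
    Nat.card {σ : Equiv.Perm α // ocs σ = (a' + 1) :: L'
        ∧ ∀ i : Fin (a' + 1), (σ ^ (i : ℕ)) b = g i}
      = Nat.card {τ : Equiv.Perm {x : α // x ∉ Set.range ⇑g} // ocs τ = L'} := by
  classical
  -- basic facts
  have hrange : ∀ σ : Equiv.Perm α, (∀ i : Fin (a' + 1), (σ ^ (i : ℕ)) b = g i) →
      Function.minimalPeriod (⇑σ) b = a' + 1 →
      ∀ x, ((∃ n : ℕ, (σ ^ n) b = x) ↔ x ∈ Set.range ⇑g) := by
    intro σ htup hmp x
    constructor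
    · rintro ⟨n, rfl⟩
      refine ⟨⟨n % (a' + 1), Nat.mod_lt _ (Nat.succ_pos _)⟩, ?_⟩
      rw [← htup ⟨n % (a' + 1), Nat.mod_lt _ (Nat.succ_pos _)⟩]
      show (σ ^ (n % (a' + 1))) b = _
      rw [← hmp, pow_mod_mp]
    · rintro ⟨i, rfl⟩
      exact ⟨(i : ℕ), htup i⟩
  have hp : ∀ σ : Equiv.Perm α, (∀ i : Fin (a' + 1), (σ ^ (i : ℕ)) b = g i) →
      Function.minimalPeriod (⇑σ) b = a' + 1 →
      ∀ x, (x ∉ Set.range ⇑g) ↔ ¬ ∃ n : ℕ, (σ ^ n) b = x :=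
    fun σ htup hmp x => not_congr (hrange σ htup hmp x).symm
  have hout : ∀ σ : Equiv.Perm α, (∀ i : Fin (a' + 1), (σ ^ (i : ℕ)) b = g i) →
      Function.minimalPeriod (⇑σ) b = a' + 1 →
      ∀ x, (x ∉ Set.range ⇑g) ↔ (σ x ∉ Set.range ⇑g) := by
    intro σ htup hmp x
    rw [hp σ htup hmp x, hp σ htup hmp (σ x)]
    exact orbit_mem_iff σ b x
  have hmp_of : ∀ σ : Equiv.Perm α, ocs σ = (a' + 1) :: L' →
      Function.minimalPeriod (⇑σ) b = a' + 1 := by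
    intro σ h
    obtain ⟨t, ht⟩ := ocs_head σ b hb
    rw [h] at ht
    exact (List.cons.injEq _ _ _ _ ▸ ht).1.symm
  -- the condition
  set C : Equiv.Perm α → Prop := fun σ => ocs σ = (a' + 1) :: L'
      ∧ ∀ i : Fin (a' + 1), (σ ^ (i : ℕ)) b = g i with hC
  have houtC : ∀ σ : Equiv.Perm α, C σ → ∀ x, (x ∉ Set.range ⇑g) ↔ (σ x ∉ Set.range ⇑g) :=
    fun σ hσ => hout σ hσ.2 (hmp_of σ hσ.1)
  have hres : ∀ (σ : Equiv.Perm α) (hσ : C σ),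
      ocs (σ.subtypePerm (p := fun x => x ∉ Set.range ⇑g) (fun x => (houtC σ hσ x).symm)) = L' := by
    intro σ hσ
    have h2 := ocs_eq_cons σ b hb (hp σ hσ.2 (hmp_of σ hσ.1)) (houtC σ hσ)
    rw [hmp_of σ hσ.1, hσ.1] at h2
    exact ((List.cons.injEq _ _ _ _ ▸ h2).2).symm
  -- the map
  refine Nat.card_eq_of_bijective
    (fun σp => ⟨σp.1.subtypePerm (p := fun x => x ∉ Set.range ⇑g) (fun x => (houtC σp.1 σp.2 x).symm), hres σp.1 σp.2⟩) ⟨?_, ?_⟩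
  · -- injective
    rintro ⟨σ₁, h₁⟩ ⟨σ₂, h₂⟩ heq
    have heq' : σ₁.subtypePerm (p := fun x => x ∉ Set.range ⇑g) (fun x => (houtC σ₁ h₁ x).symm) = σ₂.subtypePerm (p := fun x => x ∉ Set.range ⇑g) (fun x => (houtC σ₂ h₂ x).symm) :=
      congrArg Subtype.val heq
    apply Subtype.ext
    apply Equiv.ext
    intro x
    by_cases hx : x ∈ Set.range ⇑g
    · obtain ⟨i, rfl⟩ := hx
      have key : ∀ (σ : Equiv.Perm α), C σ →
          σ (g i) = (if h : (i : ℕ) + 1 < a' + 1 then g ⟨(i : ℕ) + 1, h⟩ else b) := by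
        intro σ hσ
        have e1 : σ (g i) = (σ ^ ((i : ℕ) + 1)) b := by
          rw [← hσ.2 i, ← Equiv.Perm.mul_apply, ← pow_succ']
        rw [e1]
        split_ifs with h
        · exact hσ.2 ⟨(i : ℕ) + 1, h⟩
        · have hi : (i : ℕ) + 1 = a' + 1 := by have := i.2; omega
          rw [hi, ← hmp_of σ hσ.1, pow_mp]
      rw [key σ₁ h₁, key σ₂ h₂]
    · have := DFunLike.congr_fun heq' ⟨x, hx⟩
      have hval := congrArg Subtype.val this
      exact hval
  · -- surjective
    rintro ⟨τ, hτ⟩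
    set e : Fin (a' + 1) ≃ Set.range ⇑g := Equiv.ofInjective ⇑g g.injective with he
    set c : Equiv.Perm {x : α // x ∈ Set.range ⇑g} := e.permCongr (finRotate (a' + 1)) with hc
    set σ : Equiv.Perm α := Equiv.Perm.subtypeCongr c τ with hσdef
    have hσg : ∀ i : Fin (a' + 1), σ (g i) = g (finRotate (a' + 1) i) := by
      intro i
      have hmem : g i ∈ Set.range ⇑g := ⟨i, rfl⟩
      have h1 : σ (g i) = ↑(c ⟨g i, hmem⟩) := Equiv.Perm.subtypeCongr.left_apply c τ hmem
      have h3 : e.symm ⟨g i, hmem⟩ = i := by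
        rw [Equiv.symm_apply_eq]
        rfl
      rw [h1, hc, Equiv.permCongr_apply, h3]
      rfl
    have tup : ∀ j : ℕ, ∀ hj : j < a' + 1, (σ ^ j) b = g ⟨j, hj⟩ := by
      intro j
      induction j with
      | zero =>
        intro hj
        rw [pow_zero]
        show b = g ⟨0, hj⟩
        rw [← hg]
        congr 1
      | succ j ih =>
        intro hj
        rw [pow_succ', Equiv.Perm.mul_apply, ih (by omega), hσg, finRotate_succ_apply]
        congr 1
        apply Fin.ext
        rw [Fin.val_add_one_of_lt]
        exact Fin.lt_last_iff_ne_last.mpr (by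
          intro hlast
          have := congrArg Fin.val hlast
          simp at this
          omega)
    have hper : (σ ^ (a' + 1)) b = b := by
      rw [pow_succ', Equiv.Perm.mul_apply, tup a' (Nat.lt_succ_self _), hσg,
        finRotate_succ_apply]
      have : (⟨a', Nat.lt_succ_self _⟩ : Fin (a' + 1)) = Fin.last a' := rfl
      rw [this, Fin.last_add_one, hg]
    have hmp : Function.minimalPeriod (⇑σ) b = a' + 1 := by
      have hle : Function.minimalPeriod (⇑σ) b ≤ a' + 1 :=
        Function.IsPeriodicPt.minimalPeriod_le (Nat.succ_pos _)
          (show (⇑σ)^[a' + 1] b = b by rw [Equiv.Perm.iterate_eq_pow]; exact hper)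
      have hpos := mp_pos σ b
      rcases lt_or_eq_of_le hle with hlt | h
      · exfalso
        have hpm := pow_mp σ b
        rw [tup _ hlt] at hpm
        have h0 : (⟨Function.minimalPeriod (⇑σ) b, hlt⟩ : Fin (a' + 1)) = 0 :=
          g.injective (hpm.trans hg.symm)
        have := congrArg Fin.val h0
        simp at this
        omega
      · exact h
    have htup : ∀ i : Fin (a' + 1), (σ ^ (i : ℕ)) b = g i := by
      intro i
      rw [tup (i : ℕ) i.2]
    have hsub : σ.subtypePerm (p := fun x => x ∉ Set.range ⇑g) (fun x => (hout σ htup hmp x).symm) = τ := by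
      apply Equiv.ext
      intro y
      apply Subtype.ext
      show σ ↑y = ↑(τ y)
      have := Equiv.Perm.subtypeCongr.right_apply c τ y.2
      rw [hσdef]
      exact this
    have hocs : ocs σ = (a' + 1) :: L' := by
      have h2 := ocs_eq_cons σ b hb (hp σ htup hmp) (hout σ htup hmp)
      rw [hmp, hsub, hτ] at h2
      exact h2
    refine ⟨⟨σ, hocs, htup⟩, ?_⟩
    apply Subtype.ext
    exact hsub

lemma mp_eq_of_ocs {α : Type} [Fintype α] [LinearOrder α] (σ : Equiv.Perm α) (b : α)
    (hb : ∀ x, b ≤ x) {n : ℕ} {t : List ℕ} (h : ocs σ = n :: t) :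
    Function.minimalPeriod (⇑σ) b = n := by
  obtain ⟨t', ht⟩ := ocs_head σ b hb
  rw [h] at ht
  exact (List.cons.injEq _ _ _ _ ▸ ht).1.symm

lemma fact_helper : ∀ (a m : ℕ), (a + m).factorial = (a + m).descFactorial a * m.factorial := by
  intro a m
  induction a with
  | zero => simp
  | succ n ih =>
    have h1 : n + 1 + m = (n + m) + 1 := by omega
    rw [h1, Nat.factorial_succ, Nat.succ_descFactorial_succ, ih]
    ring

/-- Embeddings of `Fin (a'+1)` sending `0` to `b` correspond to embeddings of `Fin a'`
into the complement of `b`. -/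
noncomputable def embEquiv (α : Type) [DecidableEq α] (b : α) (a' : ℕ) :
    {g : Fin (a' + 1) ↪ α // g 0 = b} ≃ (Fin a' ↪ {x : α // x ≠ b}) where
  toFun gp := ⟨fun j => ⟨gp.1 j.succ,
      fun heq => Fin.succ_ne_zero j (gp.1.injective (heq.trans gp.2.symm))⟩,
    fun j₁ j₂ h => Fin.succ_injective _ (gp.1.injective (congrArg Subtype.val h))⟩
  invFun f := ⟨⟨fun i => Fin.cases b (fun j => (f j : α)) i, by
      intro i₁ i₂ h
      induction i₁ using Fin.cases with
      | zero =>
        induction i₂ using Fin.cases with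
        | zero => rfl
        | succ j₂ =>
          simp only [Fin.cases_zero, Fin.cases_succ] at h
          exact absurd h.symm (f j₂).2
      | succ j₁ =>
        induction i₂ using Fin.cases with
        | zero =>
          simp only [Fin.cases_zero, Fin.cases_succ] at h
          exact absurd h (f j₁).2
        | succ j₂ =>
          simp only [Fin.cases_succ] at h
          rw [f.injective (Subtype.ext h)]⟩, by
    show Fin.cases (motive := fun _ => α) b (fun j => ((f j : α))) 0 = b
    rw [Fin.cases_zero]⟩
  left_inv gp := by
    apply Subtype.ext
    apply DFunLike.ext
    intro i
    induction i using Fin.cases with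
    | zero =>
      simp only [Function.Embedding.coeFn_mk, Fin.cases_zero]
      exact gp.2.symm
    | succ j =>
      simp only [Function.Embedding.coeFn_mk, Fin.cases_succ]
      rfl
  right_inv f := by
    apply DFunLike.ext
    intro j
    apply Subtype.ext
    simp only [Function.Embedding.coeFn_mk, Fin.cases_succ]
    rfl

lemma main (L : List ℕ) : ∀ (α : Type) [Fintype α] [LinearOrder α],
    (∀ x ∈ L, 0 < x) → L.sum = Fintype.card α →
    Nat.card {σ : Equiv.Perm α // ocs σ = L} *
      ∏ i ∈ Finset.range L.length, (Fintype.card α - (L.take i).sum)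
      = (Fintype.card α).factorial := by
  induction L with
  | nil =>
    intro α _ _ _ hsum
    haveI : IsEmpty α := Fintype.card_eq_zero_iff.mp (by rw [← hsum]; rfl)
    have hocs : ∀ σ : Equiv.Perm α, ocs σ = [] := by
      intro σ
      have he : cmins σ = ∅ := Finset.eq_empty_of_isEmpty _
      rw [ocs, he]
      simp
    simp only [List.length_nil, Finset.range_zero, Finset.prod_empty, mul_one]
    rw [Nat.card_congr (Equiv.subtypeUnivEquiv hocs), Nat.card_eq_fintype_card,
      Fintype.card_perm]
  | cons a L' IH =>
    intro α _ _ hpos hsum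
    classical
    obtain ⟨a', rfl⟩ : ∃ a', a = a' + 1 := ⟨a - 1, by have := hpos a (by simp); omega⟩
    have hN : Fintype.card α = (a' + 1) + L'.sum := by rw [← hsum, List.sum_cons]
    haveI : Nonempty α := by rw [← Fintype.card_pos_iff]; omega
    set b := (Finset.univ : Finset α).min' Finset.univ_nonempty with hbdef
    have hb : ∀ x, b ≤ x := fun x => Finset.min'_le _ x (Finset.mem_univ x)
    set M := L'.sum with hM
    set G := {g : Fin (a' + 1) ↪ α // g 0 = b} with hG
    letI : Fintype G := Fintype.ofFinite G
    -- classifying map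
    have hmpσ : ∀ σp : {σ : Equiv.Perm α // ocs σ = (a' + 1) :: L'},
        Function.minimalPeriod (⇑σp.1) b = a' + 1 :=
      fun σp => mp_eq_of_ocs σp.1 b hb σp.2
    set F : {σ : Equiv.Perm α // ocs σ = (a' + 1) :: L'} → G := fun σp =>
      ⟨⟨fun i => (σp.1 ^ (i : ℕ)) b, by
        intro i j hij
        apply Fin.ext
        have h1 : (i : ℕ) ∈ Set.Iio (Function.minimalPeriod (⇑σp.1) b) := by
          rw [hmpσ σp]; exact i.2
        have h2 : (j : ℕ) ∈ Set.Iio (Function.minimalPeriod (⇑σp.1) b) := by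
          rw [hmpσ σp]; exact j.2
        refine Function.iterate_injOn_Iio_minimalPeriod h1 h2 ?_
        show (⇑σp.1)^[(i : ℕ)] b = (⇑σp.1)^[(j : ℕ)] b
        rw [Equiv.Perm.iterate_eq_pow, Equiv.Perm.iterate_eq_pow]
        exact hij⟩, by
      show (σp.1 ^ ((0 : Fin (a' + 1)) : ℕ)) b = b
      simp⟩ with hF
    have E1 : {σ : Equiv.Perm α // ocs σ = (a' + 1) :: L'}
        ≃ Σ g : G, {σp : {σ : Equiv.Perm α // ocs σ = (a' + 1) :: L'} // F σp = g} :=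
      (Equiv.sigmaFiberEquiv F).symm
    letI : Fintype {σ : Equiv.Perm α // ocs σ = (a' + 1) :: L'} := Fintype.ofFinite _
    letI : ∀ g : G, Fintype {σp : {σ : Equiv.Perm α // ocs σ = (a' + 1) :: L'} // F σp = g} :=
      fun g => Fintype.ofFinite _
    have hcard1 : Nat.card {σ : Equiv.Perm α // ocs σ = (a' + 1) :: L'}
        = ∑ g : G, Nat.card {σp : {σ : Equiv.Perm α // ocs σ = (a' + 1) :: L'} // F σp = g} := by
      rw [Nat.card_congr E1, Nat.card_eq_fintype_card, Fintype.card_sigma]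
      exact Finset.sum_congr rfl fun g _ => (Nat.card_eq_fintype_card).symm
    have hfib_card : ∀ g : G,
        Nat.card {σp : {σ : Equiv.Perm α // ocs σ = (a' + 1) :: L'} // F σp = g}
        = Nat.card {σ : Equiv.Perm α // ocs σ = (a' + 1) :: L'
            ∧ ∀ i : Fin (a' + 1), (σ ^ (i : ℕ)) b = g.1 i} := by
      intro g
      apply Nat.card_congr
      refine ⟨fun x => ⟨x.1.1, x.1.2, fun i => ?_⟩,
        fun y => ⟨⟨y.1, y.2.1⟩, Subtype.ext (DFunLike.ext _ _ fun i => y.2.2 i)⟩,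
        fun x => Subtype.ext (Subtype.ext rfl), fun y => Subtype.ext rfl⟩
      have h1 := congrArg Subtype.val x.2
      exact DFunLike.congr_fun h1 i
    -- per-fiber count
    have hstep : ∀ g : G,
        Nat.card {σ : Equiv.Perm α // ocs σ = (a' + 1) :: L'
            ∧ ∀ i : Fin (a' + 1), (σ ^ (i : ℕ)) b = g.1 i}
          * ∏ i ∈ Finset.range L'.length, (M - (L'.take i).sum) = M.factorial := by
      intro g
      letI : Fintype {x : α // x ∉ Set.range ⇑g.1} := Fintype.ofFinite _
      have hcf := card_fib b hb a' L' g.1 g.2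
      have hsub_card : Fintype.card {x : α // x ∉ Set.range ⇑g.1} = M := by
        have h1 : Fintype.card {x : α // x ∈ Set.range ⇑g.1} = a' + 1 := by
          rw [Fintype.card_eq_nat_card]
          calc Nat.card {x : α // x ∈ Set.range ⇑g.1}
              = Nat.card (Fin (a' + 1)) :=
                Nat.card_congr ((Equiv.ofInjective ⇑g.1 g.1.injective).symm)
            _ = a' + 1 := by rw [Nat.card_eq_fintype_card, Fintype.card_fin]
        have h2 : Fintype.card {x : α // ¬ x ∈ Set.range ⇑g.1}
            = Fintype.card α - (a' + 1) := by
          rw [Fintype.card_subtype_compl, h1]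
        exact h2.trans (by omega)
      have hIH := IH {x : α // x ∉ Set.range ⇑g.1}
        (fun x hx => hpos x (by simp [hx])) hsub_card.symm
      rw [hsub_card] at hIH
      rw [hcf]
      exact hIH
    -- product rearrangement
    have hlen : ((a' + 1) :: L').length = L'.length + 1 := rfl
    have hprod : ∏ i ∈ Finset.range (L'.length + 1),
        (Fintype.card α - (((a' + 1) :: L').take i).sum)
        = (∏ i ∈ Finset.range L'.length, (M - (L'.take i).sum)) * Fintype.card α := by
      rw [Finset.prod_range_succ']
      have e0 : Fintype.card α - (((a' + 1) :: L').take 0).sum = Fintype.card α := by simp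
      rw [e0]
      congr 1
      apply Finset.prod_congr rfl
      intro i _
      rw [List.take_succ_cons, List.sum_cons, hN]
      omega
    -- G count
    have hG_card : Fintype.card G = (Fintype.card α - 1).descFactorial a' := by
      letI : Fintype {x : α // x ≠ b} := Fintype.ofFinite _
      rw [Fintype.card_congr (embEquiv α b a'), Fintype.card_embedding_eq, Fintype.card_fin]
      congr 1
      have h2 : Fintype.card {x : α // ¬ x = b} = Fintype.card α - 1 := by
        rw [Fintype.card_subtype_compl, Fintype.card_subtype_eq]
      exact h2
    -- assemble
    rw [hlen, hprod, hcard1, Finset.sum_congr rfl (fun g _ => hfib_card g), ← mul_assoc,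
      Finset.sum_mul, Finset.sum_congr rfl (fun g _ => hstep g), Finset.sum_const,
      Finset.card_univ, smul_eq_mul, hG_card]
    rw [hN, show a' + 1 + M - 1 = a' + M from by omega,
      show a' + 1 + M = (a' + M) + 1 from by omega, Nat.factorial_succ, ← fact_helper]
    ring


theorem stmt_8 (N : ℕ) (hN : 1 ≤ N) (L : List ℕ)
    (hpos : ∀ a ∈ L, 0 < a) (hsum : L.sum = N) :
    Nat.card {σ : Equiv.Perm (Fin N) // OCS σ = L}
        * ∏ i ∈ Finset.range L.length, (N - (L.take i).sum) = Nat.factorial N ∧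
    (Nat.card {σ : Equiv.Perm (Fin N) // OCS σ = L} : ℚ) / (Nat.factorial N : ℚ)
        = ∏ i ∈ Finset.range L.length, (1 / ((N : ℚ) - ((L.take i).sum : ℚ))) := by
  have h1 : Nat.card {σ : Equiv.Perm (Fin N) // OCS σ = L}
      * ∏ i ∈ Finset.range L.length, (N - (L.take i).sum) = Nat.factorial N := by
    have h := main L (Fin N) hpos (by rw [hsum, Fintype.card_fin])
    rw [Fintype.card_fin] at h
    exact h
  refine ⟨h1, ?_⟩
  have hfac : ∀ i ∈ Finset.range L.length, 0 < N - (L.take i).sum := by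
    intro i hi
    rw [Finset.mem_range] at hi
    have hd : L.drop i ≠ [] := by
      intro h
      have hl := congrArg List.length h
      rw [List.length_drop] at hl
      simp at hl
      omega
    obtain ⟨cc, t, hct⟩ := List.exists_cons_of_ne_nil hd
    have hcL : cc ∈ L := List.drop_subset i L (by rw [hct]; exact List.mem_cons_self)
    have hcpos := hpos cc hcL
    have hdpos : 0 < (L.drop i).sum := by rw [hct, List.sum_cons]; omega
    have hts := List.sum_take_add_sum_drop L i
    rw [hsum] at hts
    omega
  have hPne : (∏ i ∈ Finset.range L.length, (N - (L.take i).sum)) ≠ 0 :=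
    (Finset.prod_pos hfac).ne'
  have hcast : ∀ i ∈ Finset.range L.length,
      (1 : ℚ) / ((N : ℚ) - ((L.take i).sum : ℚ))
        = 1 / (((N - (L.take i).sum : ℕ)) : ℚ) := by
    intro i hi
    have h0 := hfac i hi
    congr 1
    rw [Nat.cast_sub (by omega)]
  rw [Finset.prod_congr rfl hcast]
  have hsplit : ∏ i ∈ Finset.range L.length, ((1 : ℚ) / (((N - (L.take i).sum : ℕ)) : ℚ))
      = 1 / ((∏ i ∈ Finset.range L.length, (N - (L.take i).sum) : ℕ) : ℚ) := by
    rw [Nat.cast_prod, Finset.prod_div_distrib, Finset.prod_const_one]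
  rw [hsplit]
  have hfactne : ((Nat.factorial N : ℕ) : ℚ) ≠ 0 := by
    exact_mod_cast (Nat.factorial_pos N).ne'
  have hPneQ : ((∏ i ∈ Finset.range L.length, (N - (L.take i).sum) : ℕ) : ℚ) ≠ 0 := by
    exact_mod_cast hPne
  rw [div_eq_div_iff hfactne hPneQ]
  have hq := congrArg (Nat.cast : ℕ → ℚ) h1
  push_cast at hq ⊢
  linarith
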